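/- Let g be a monic divisor of x^{2n} − 1 in K[x] of degree k with 0 ≤ k ≤ 2n − 1, let D ⊆ K^{2n} be the cyclic code corresponding to the ideal ⟨g⟩ of K[x]/⟨x^{2n} − 1⟩, let h(x) = (x^{2n} − 1)/g(x) and h*(x) = x^{2n−k} h(1/x) its reciprocal polynomial with coefficient vector V_{h*} ∈ K^{2n}, and let C = Ψ^{-1}(D) ⊆ F^n be the corresponding additive conjucyclic code. Then the alternating dual C^{⊥_a} equals the K-linear span of the k vectors Ψ^{-1}(τ(σ^i(V_{h*}))) for 0 ≤ i ≤ k − 1. -/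

import Mathlib

open Polynomial


/-- The map `Ψ : F^n → K^{2n}`,
`Ψ(α₀,…,α_{n−1}) = (Tr(βα₀),…,Tr(βα_{n−1}), Tr(β̄α₀),…,Tr(β̄α_{n−1}))`, where `β̄ = β^q`. -/
def Psi (q n : ℕ) {K F : Type*} [Field K] [Field F] (Tr : F → K) (β : F)
    (α : Fin n → F) : Fin (2 * n) → K :=
  fun i =>
    if h : (i : ℕ) < n then Tr (β * α ⟨(i : ℕ), h⟩)
    else Tr (β ^ q * α ⟨(i : ℕ) - n, by have := i.isLt; omega⟩)

/-- The (right) cyclic shift `σ : K^m → K^m`, `σ(v₀,…,v_{m−1}) = (v_{m−1}, v₀,…,v_{m−2})`. -/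
def cycShift (m : ℕ) {K : Type*} (v : Fin m → K) : Fin m → K :=
  fun i =>
    if _h : (i : ℕ) = 0 then v ⟨m - 1, by have := i.isLt; omega⟩
    else v ⟨(i : ℕ) - 1, by have := i.isLt; omega⟩

/-- The map `τ : K^{2n} → K^{2n}`, `τ(v₀,…,v_{2n−1}) = (−v_n,…,−v_{2n−1}, v₀,…,v_{n−1})`. -/
def tau (n : ℕ) {K : Type*} [Field K] (v : Fin (2 * n) → K) : Fin (2 * n) → K :=
  fun i =>
    if h : (i : ℕ) < n then - v ⟨n + (i : ℕ), by omega⟩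
    else v ⟨(i : ℕ) - n, by have := i.isLt; omega⟩

/-- The alternating inner product on `F^n`:
`⟨u,v⟩_a = (β̄² − β²) Σ_{i=0}^{n−1} (u_i v̄_i − ū_i v_i)`, where `x̄ = x^q`. -/
def altInner (q n : ℕ) {F : Type*} [Field F] (β : F) (u v : Fin n → F) : F :=
  ((β ^ q) ^ 2 - β ^ 2) * ∑ i : Fin n, (u i * (v i) ^ q - (u i) ^ q * v i)

/-- The coefficient vector in `K^m` of a polynomial `g ∈ K[x]`. -/
def coeffVec (m : ℕ) {K : Type*} [Field K] (g : K[X]) : Fin m → K :=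
  fun i => g.coeff (i : ℕ)

/-- The cyclic code of length `m` corresponding to the ideal `⟨g⟩` of `K[x]/⟨x^m − 1⟩`. -/
def cyclicCodeOf (m : ℕ) {K : Type*} [Field K] (g : K[X]) : Set (Fin m → K) :=
  {v | Ideal.Quotient.mk (Ideal.span {(X : K[X]) ^ m - 1})
        (∑ i : Fin m, Polynomial.C (v i) * X ^ (i : ℕ)) ∈
      Ideal.span {Ideal.Quotient.mk (Ideal.span {(X : K[X]) ^ m - 1}) g}}


namespace Stmt15Aux

variable {K : Type*} [Field K]

noncomputable def polyOf (m : ℕ) (v : Fin m → K) : K[X] :=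
  ∑ i : Fin m, Polynomial.C (v i) * X ^ (i : ℕ)

lemma coeff_polyOf (m : ℕ) (v : Fin m → K) (t : ℕ) :
    (polyOf m v).coeff t = if h : t < m then v ⟨t, h⟩ else 0 := by
  rw [polyOf, Polynomial.finset_sum_coeff]
  simp only [Polynomial.coeff_C_mul, Polynomial.coeff_X_pow, mul_ite, mul_one, mul_zero]
  split
  · next h =>
    rw [Finset.sum_eq_single (⟨t, h⟩ : Fin m)]
    · simp
    · intro b _ hb
      rw [if_neg]
      intro hc
      exact hb (by apply Fin.ext; simp [← hc])
    · intro hx; exact absurd (Finset.mem_univ _) hx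
  · next h =>
    apply Finset.sum_eq_zero
    intro i _
    rw [if_neg]
    intro hc
    exact h (hc ▸ i.isLt)

lemma polyOf_natDegree_lt (m : ℕ) (hm : 0 < m) (v : Fin m → K) :
    (polyOf m v).natDegree < m := by
  by_contra hle
  push_neg at hle
  rcases eq_or_ne (polyOf m v) 0 with h0 | h0
  · rw [h0, Polynomial.natDegree_zero] at hle; omega
  · have hl := Polynomial.leadingCoeff_ne_zero.mpr h0
    rw [Polynomial.leadingCoeff, coeff_polyOf, dif_neg (by omega)] at hl
    exact hl rfl

lemma polyOf_coeffVec (m : ℕ) {p : K[X]} (hp : p.natDegree < m) :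
    polyOf m (coeffVec m p) = p := by
  ext t
  rw [coeff_polyOf]
  split
  · rfl
  · exact (Polynomial.coeff_eq_zero_of_natDegree_lt (by omega)).symm

lemma polyOf_zero (m : ℕ) : polyOf m (0 : Fin m → K) = 0 := by
  simp [polyOf]

noncomputable def coeffVecL (m : ℕ) : K[X] →ₗ[K] (Fin m → K) where
  toFun := coeffVec m
  map_add' p q := by funext i; simp [coeffVec]
  map_smul' c p := by funext i; simp [coeffVec]

noncomputable def dotB (m : ℕ) : LinearMap.BilinForm K (Fin m → K) :=
  LinearMap.mk₂ K (fun u v => ∑ i, u i * v i)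
    (fun u u' v => by simp [add_mul, Finset.sum_add_distrib])
    (fun c u v => by simp [Finset.mul_sum, mul_assoc])
    (fun u v v' => by simp [mul_add, Finset.sum_add_distrib])
    (fun c u v => by simp [Finset.mul_sum, mul_assoc, mul_left_comm])

lemma dotB_apply (m : ℕ) (u v : Fin m → K) : dotB m u v = ∑ i, u i * v i := rfl

lemma dotB_refl (m : ℕ) : (dotB (K := K) m).IsRefl := by
  intro u v h
  rw [dotB_apply] at h ⊢
  rw [← h]
  exact Finset.sum_congr rfl fun i _ => mul_comm _ _

lemma dotB_nondeg (m : ℕ) : (dotB (K := K) m).Nondegenerate := by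
  suffices hL : LinearMap.SeparatingLeft (dotB (K := K) m) from
    ⟨hL, fun u hu => hL u fun v => dotB_refl m v u (hu v)⟩
  intro u hu
  funext j
  have h := hu (Pi.single j 1)
  rw [dotB_apply] at h
  simpa [Pi.single_apply, mul_ite, Finset.sum_ite_eq'] using h

lemma dot_coeff (m : ℕ) (hm : 0 < m) (P Q : K[X]) :
    ∑ t : Fin m, P.coeff t * Q.coeff t
      = (P * Polynomial.reflect (m - 1) Q).coeff (m - 1) := by
  obtain ⟨N, rfl⟩ : ∃ N, m = N + 1 := ⟨m - 1, by omega⟩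
  simp only [Nat.add_sub_cancel]
  rw [Polynomial.coeff_mul, Finset.Nat.sum_antidiagonal_eq_sum_range_succ_mk,
    Fin.sum_univ_eq_sum_range (fun t => P.coeff t * Q.coeff t)]
  refine Finset.sum_congr rfl fun i hi => ?_
  rw [Finset.mem_range] at hi
  rw [Polynomial.coeff_reflect, Polynomial.revAt_le (by omega : N - i ≤ N),
    show N - (N - i) = i by omega]

lemma reflect_reflect (N : ℕ) (p : K[X]) :
    Polynomial.reflect N (Polynomial.reflect N p) = p := by
  ext t
  rw [Polynomial.coeff_reflect, Polynomial.coeff_reflect, Polynomial.revAt_invol]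

lemma orth_core (m k : ℕ) (hm : 0 < m) (hk1 : k ≤ m - 1)
    (g : K[X]) (hg : g.Monic) (hgd : g.natDegree = k)
    (h : K[X]) (hh : h.Monic) (hhd : h.natDegree = m - k)
    (hgh : g * h = X ^ m - 1)
    (c : K[X]) (hc : (g * c).natDegree < m)
    (j : ℕ) (hj : j < k) :
    ∑ t : Fin m, (g * c).coeff t * (X ^ j * h.reverse).coeff t = 0 := by
  rcases eq_or_ne c 0 with rfl | hcne
  · simp
  have hcd : c.natDegree < m - k := by
    rw [Polynomial.natDegree_mul hg.ne_zero hcne, hgd] at hc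
    omega
  rw [dot_coeff m hm]
  have hrefl : Polynomial.reflect (m - 1) (X ^ j * h.reverse)
      = X ^ (k - 1 - j) * h := by
    have h3 : (m - 1) = (k - 1) + (m - k) := by omega
    rw [h3, Polynomial.reflect_mul _ _
      (by rw [Polynomial.natDegree_X_pow]; omega)
      (le_trans h.reverse_natDegree_le (le_of_eq hhd)),
      Polynomial.reflect_monomial, Polynomial.revAt_le (by omega : j ≤ k - 1)]
    congr 1
    rw [Polynomial.reverse, hhd]
    exact reflect_reflect _ _
  rw [hrefl]
  have hre : (g * c) * (X ^ (k - 1 - j) * h) = ((X ^ m - 1) * c) * X ^ (k - 1 - j) := by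
    rw [← hgh]; ring
  rw [hre, Polynomial.coeff_mul_X_pow', if_pos (by omega)]
  have hidx : m - 1 - (k - 1 - j) = m - k + j := by omega
  rw [hidx, sub_mul, one_mul, Polynomial.coeff_sub,
    show (X : K[X]) ^ m * c = c * X ^ m from mul_comm _ _,
    Polynomial.coeff_mul_X_pow', if_neg (by omega),
    Polynomial.coeff_eq_zero_of_natDegree_lt (by omega : c.natDegree < m - k + j)]
  ring

lemma mem_cyclicCodeOf_iff (m : ℕ) (hm : 0 < m) (g : K[X]) (hdvd : g ∣ X ^ m - 1)
    (v : Fin m → K) :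
    v ∈ cyclicCodeOf m g ↔ g ∣ polyOf m v := by
  unfold cyclicCodeOf
  rw [Set.mem_setOf_eq, Ideal.mem_span_singleton']
  constructor
  · rintro ⟨z, hz⟩
    obtain ⟨r, rfl⟩ := Ideal.Quotient.mk_surjective z
    rw [← map_mul, Ideal.Quotient.eq] at hz
    rw [Ideal.mem_span_singleton] at hz
    obtain ⟨w, hw⟩ := hz
    have : polyOf m v = r * g - (X ^ m - 1) * w := by
      rw [← hw]; unfold polyOf; ring
    rw [this]
    exact dvd_sub (Dvd.intro_left r rfl) (Dvd.dvd.mul_right hdvd w)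
  · rintro ⟨c, hc⟩
    refine ⟨Ideal.Quotient.mk _ c, ?_⟩
    rw [← map_mul]
    unfold polyOf at hc
    rw [hc, mul_comm]

lemma indep_shifts (m e : ℕ) (hm : 0 < m) (p : K[X]) (hp : p ≠ 0)
    (hdeg : e + p.natDegree ≤ m) :
    LinearIndependent K (fun j : Fin e => coeffVec m (X ^ (j : ℕ) * p)) := by
  rcases Nat.eq_zero_or_pos e with rfl | he
  · exact linearIndependent_empty_type
  rw [Fintype.linearIndependent_iff]
  intro c hc
  have h1 : (∑ j : Fin e, c j • (X ^ (j : ℕ) * p)) = polyOf e c * p := by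
    rw [polyOf, Finset.sum_mul]
    exact Finset.sum_congr rfl fun j _ => by
      rw [Polynomial.smul_eq_C_mul, mul_assoc]
  have h2 : coeffVec m (polyOf e c * p) = 0 := by
    calc coeffVec m (polyOf e c * p)
        = coeffVecL m (∑ j : Fin e, c j • (X ^ (j : ℕ) * p)) := by rw [h1]; rfl
      _ = ∑ j : Fin e, c j • coeffVec m (X ^ (j : ℕ) * p) := by
          rw [map_sum]; simp only [map_smul]; rfl
      _ = 0 := hc
  have hdlt : (polyOf e c * p).natDegree < m := by
    rcases eq_or_ne (polyOf e c) 0 with h0 | h0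
    · rw [h0, zero_mul, Polynomial.natDegree_zero]; omega
    · rw [Polynomial.natDegree_mul h0 hp]
      have := polyOf_natDegree_lt e he c
      omega
  have h3 : polyOf e c * p = 0 := by
    have h4 := polyOf_coeffVec m hdlt (p := polyOf e c * p)
    rw [h2, polyOf_zero] at h4
    exact h4.symm
  have hP0 : polyOf e c = 0 := by
    rcases mul_eq_zero.mp h3 with h | h
    · exact h
    · exact absurd h hp
  intro j
  have h5 := congrArg (fun q => Polynomial.coeff q (j : ℕ)) hP0
  simpa [coeff_polyOf, j.isLt] using h5

lemma shift_iter (m : ℕ) (p : K[X]) (j : ℕ) (hj : p.natDegree + j < m) :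
    (cycShift m)^[j] (coeffVec m p) = coeffVec m (X ^ j * p) := by
  induction j with
  | zero => simp [coeffVec]
  | succ j ih =>
    rw [Function.iterate_succ_apply', ih (by omega)]
    funext i
    show cycShift m (coeffVec m (X ^ j * p)) i = coeffVec m (X ^ (j + 1) * p) i
    have hdegl : (X ^ j * p : K[X]).natDegree ≤ j + p.natDegree :=
      le_trans (Polynomial.natDegree_mul_le) (by rw [Polynomial.natDegree_X_pow])
    unfold cycShift coeffVec
    by_cases h0 : (i : ℕ) = 0
    · rw [dif_pos h0]
      have hL : (X ^ j * p : K[X]).coeff (m - 1) = 0 :=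
        Polynomial.coeff_eq_zero_of_natDegree_lt (by omega)
      have hR : (X ^ (j + 1) * p : K[X]).coeff (i : ℕ) = 0 := by
        rw [h0, mul_comm, Polynomial.coeff_mul_X_pow', if_neg (by omega)]
      exact hL.trans hR.symm
    · rw [dif_neg h0]
      have he : (X ^ (j + 1) * p : K[X]) = (X ^ j * p) * X := by ring
      obtain ⟨t, ht⟩ : ∃ t, (i : ℕ) = t + 1 := ⟨(i : ℕ) - 1, by omega⟩
      show (X ^ j * p : K[X]).coeff ((i : ℕ) - 1) = (X ^ (j + 1) * p).coeff (i : ℕ)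
      rw [ht, he, Nat.add_sub_cancel, Polynomial.coeff_mul_X]


section PsiPart

variable (q n : ℕ) {K F : Type*} [Field K] [Field F] [Algebra K F] (Tr : F → K) (β : F)

lemma Psi_lo (u : Fin n → F) (i : Fin n) (hlt : (i : ℕ) < 2 * n) :
    Psi q n Tr β u ⟨(i : ℕ), hlt⟩ = Tr (β * u i) := by
  unfold Psi
  rw [dif_pos (show ((⟨(i : ℕ), hlt⟩ : Fin (2 * n)) : ℕ) < n from i.isLt)]

lemma Psi_hi (u : Fin n → F) (i : Fin n) (hlt : n + (i : ℕ) < 2 * n) :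
    Psi q n Tr β u ⟨n + (i : ℕ), hlt⟩ = Tr (β ^ q * u i) := by
  unfold Psi
  rw [dif_neg (show ¬ ((⟨n + (i : ℕ), hlt⟩ : Fin (2 * n)) : ℕ) < n by simp)]
  exact congrArg Tr (congrArg (β ^ q * ·) (congrArg u (Fin.ext (by simp))))

noncomputable def PsiL
    (hadd : ∀ x y : F, Tr (x + y) = Tr x + Tr y)
    (hsmul : ∀ (c : K) (x : F), Tr (algebraMap K F c * x) = c * Tr x) :
    (Fin n → F) →ₗ[K] (Fin (2 * n) → K) where
  toFun := Psi q n Tr β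
  map_add' u v := by
    funext i
    unfold Psi
    by_cases h : (i : ℕ) < n
    · simp only [dif_pos h, Pi.add_apply]
      rw [mul_add, hadd]
    · simp only [dif_neg h, Pi.add_apply]
      rw [mul_add, hadd]
  map_smul' c u := by
    funext i
    unfold Psi
    by_cases h : (i : ℕ) < n
    · simp only [dif_pos h, Pi.smul_apply, RingHom.id_apply, smul_eq_mul]
      rw [Algebra.smul_def, mul_left_comm, hsmul]
    · simp only [dif_neg h, Pi.smul_apply, RingHom.id_apply, smul_eq_mul]
      rw [Algebra.smul_def, mul_left_comm, hsmul]

end PsiPart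

section TauPart

variable (n : ℕ) {K : Type*} [Field K]

lemma tau_lo (v : Fin (2 * n) → K) (i : Fin n) (h1 : (i : ℕ) < 2 * n)
    (h2 : n + (i : ℕ) < 2 * n) :
    tau n v ⟨(i : ℕ), h1⟩ = - v ⟨n + (i : ℕ), h2⟩ := by
  unfold tau
  rw [dif_pos (show ((⟨(i : ℕ), h1⟩ : Fin (2 * n)) : ℕ) < n from i.isLt)]

lemma tau_hi (v : Fin (2 * n) → K) (i : Fin n) (h2 : n + (i : ℕ) < 2 * n)
    (h1 : (i : ℕ) < 2 * n) :
    tau n v ⟨n + (i : ℕ), h2⟩ = v ⟨(i : ℕ), h1⟩ := by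
  unfold tau
  rw [dif_neg (show ¬ ((⟨n + (i : ℕ), h2⟩ : Fin (2 * n)) : ℕ) < n by simp)]
  exact congrArg v (Fin.ext (by simp))

noncomputable def tauL : (Fin (2 * n) → K) →ₗ[K] (Fin (2 * n) → K) where
  toFun := tau n
  map_add' u v := by
    funext i
    unfold tau
    by_cases h : (i : ℕ) < n
    · simp only [dif_pos h, Pi.add_apply, neg_add]
    · simp only [dif_neg h, Pi.add_apply]
  map_smul' c u := by
    funext i
    unfold tau
    by_cases h : (i : ℕ) < n
    · simp only [dif_pos h, Pi.smul_apply, RingHom.id_apply, smul_eq_mul, mul_neg]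
    · simp only [dif_neg h, Pi.smul_apply, RingHom.id_apply, smul_eq_mul]

lemma tau_tau (v : Fin (2 * n) → K) : tau n (tau n v) = - v := by
  funext i
  show tau n (tau n v) i = - (v i)
  by_cases h : (i : ℕ) < n
  · have hi : i = ⟨((⟨(i : ℕ), h⟩ : Fin n) : ℕ), by omega⟩ := Fin.ext rfl
    rw [hi, tau_lo n (tau n v) ⟨(i : ℕ), h⟩ (by omega) (by omega),
      tau_hi n v ⟨(i : ℕ), h⟩ (by omega) (by omega)]
  · have hn2 : (i : ℕ) - n < n := by omega
    have hi : i = ⟨n + ((⟨(i : ℕ) - n, hn2⟩ : Fin n) : ℕ), by omega⟩ := Fin.ext (by simp; omega)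
    rw [hi, tau_hi n (tau n v) ⟨(i : ℕ) - n, hn2⟩ (by omega) (by omega),
      tau_lo n v ⟨(i : ℕ) - n, hn2⟩ (by omega) (by omega)]

end TauPart

lemma sum_split {M : Type*} [AddCommMonoid M] (n : ℕ) (f : Fin (2 * n) → M) :
    ∑ i, f i = ∑ i : Fin n, (f ⟨(i : ℕ), by omega⟩ + f ⟨n + (i : ℕ), by omega⟩) := by
  classical
  let F' : ℕ → M := fun t => if h : t < 2 * n then f ⟨t, h⟩ else 0
  have h1 : ∑ i, f i = ∑ t ∈ Finset.range (2 * n), F' t := by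
    rw [← Fin.sum_univ_eq_sum_range]
    refine Finset.sum_congr rfl fun i _ => ?_
    show f i = F' (i : ℕ)
    simp only [F']
    rw [dif_pos i.isLt]
  have h2 : ∑ t ∈ Finset.range (2 * n), F' t
      = ∑ t ∈ Finset.range n, F' t + ∑ t ∈ Finset.range n, F' (n + t) := by
    have e1 : ∑ t ∈ Finset.Ico 0 n, F' t + ∑ t ∈ Finset.Ico n (2 * n), F' t
        = ∑ t ∈ Finset.Ico 0 (2 * n), F' t :=
      Finset.sum_Ico_consecutive F' (Nat.zero_le n) (by omega)
    have e2 : ∑ t ∈ Finset.Ico n (2 * n), F' t = ∑ t ∈ Finset.range n, F' (n + t) := by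
      rw [Finset.sum_Ico_eq_sum_range, show 2 * n - n = n from by omega]
    rw [Finset.range_eq_Ico, ← e1, e2, ← Finset.range_eq_Ico]
  rw [h1, h2, ← Finset.sum_add_distrib,
    ← Fin.sum_univ_eq_sum_range (fun t => F' t + F' (n + t)) n]
  refine Finset.sum_congr rfl fun i _ => ?_
  show F' (i : ℕ) + F' (n + (i : ℕ)) = _
  simp only [F']
  rw [dif_pos (by omega : (i : ℕ) < 2 * n), dif_pos (by omega : n + (i : ℕ) < 2 * n)]

end Stmt15Aux
set_option maxHeartbeats 1000000 in
open Stmt15Aux in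
/-- Let `g` be a monic divisor of `x^{2n} − 1` in `K[x]` of degree `k` with
`0 ≤ k ≤ 2n − 1`, `D ⊆ K^{2n}` the cyclic code corresponding to `⟨g⟩`,
`h = (x^{2n} − 1)/g` with reciprocal polynomial `h* = x^{2n−k}h(1/x)` (`h.reverse`) and
coefficient vector `V_{h*} ∈ K^{2n}`, and let `C = Ψ⁻¹(D) ⊆ F^n` be the corresponding
additive conjucyclic code.  Then the alternating dual `C^{⊥_a}` equals the `K`-linear span
of the `k` vectors `Ψ⁻¹(τ(σ^i(V_{h*})))`, `0 ≤ i ≤ k − 1`. -/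
theorem stmt15 (q n k : ℕ) (hn : 0 < n) {K F : Type*} [Field K] [Fintype K] [Field F]
    [Fintype F] [Algebra K F]
    (hK : Fintype.card K = q) (hF : Fintype.card F = q ^ 2)
    (β : F) (hβ : ∀ x : F, x ≠ 0 → ∃ j : ℕ, x = β ^ j)
    (Tr : F → K) (hTr : ∀ x : F, algebraMap K F (Tr x) = x + x ^ q)
    (g : K[X]) (hg : g.Monic) (hdvd : g ∣ X ^ (2 * n) - 1)
    (hdeg : g.natDegree = k) (hk : k ≤ 2 * n - 1) :
    {v : Fin n → F | ∀ u ∈ Psi q n Tr β ⁻¹' cyclicCodeOf (2 * n) g,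
        altInner q n β u v = 0} =
      (Submodule.span K (Set.range fun i : Fin k =>
          Function.invFun (Psi q n Tr β)
            (tau n ((cycShift (2 * n))^[(i : ℕ)]
              (coeffVec (2 * n) (((X : K[X]) ^ (2 * n) - 1) / g).reverse)))) :
        Set (Fin n → F)) := by
  classical
  have hq2 : 2 ≤ q := by rw [← hK]; exact Fintype.one_lt_card
  have hn2 : 0 < 2 * n := by omega
  have hinj : Function.Injective (algebraMap K F) := (algebraMap K F).injective
  -- characteristic & Frobenius
  obtain ⟨f, hp, hqp⟩ : ∃ f : ℕ+, (ringChar K).Prime ∧ q = (ringChar K) ^ (f : ℕ) := by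
    obtain ⟨f, hp, hc⟩ := FiniteField.card K (ringChar K)
    exact ⟨f, hp, by rw [← hK, hc]⟩
  haveI : CharP F (ringChar K) := charP_of_injective_algebraMap hinj _
  haveI : Fact (ringChar K).Prime := ⟨hp⟩
  have hfrob : ∀ x y : F, (x + y) ^ q = x ^ q + y ^ q := by
    intro x y; rw [hqp]; exact add_pow_char_pow x y (ringChar K) (f : ℕ)
  have hpowF : ∀ x : F, (x ^ q) ^ q = x := by
    intro x
    rw [← pow_mul, ← sq, ← hF]
    exact FiniteField.pow_card x
  have hb : (β ^ q) ^ q = β := hpowF β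
  -- Tr is K-linear
  have Tr_add : ∀ x y : F, Tr (x + y) = Tr x + Tr y := by
    intro x y
    apply hinj
    rw [map_add, hTr, hTr, hTr, hfrob]
    ring
  have Tr_smul : ∀ (c : K) (x : F), Tr (algebraMap K F c * x) = c * Tr x := by
    intro c x
    apply hinj
    have hc : (algebraMap K F c) ^ q = algebraMap K F c := by
      rw [← map_pow]
      congr 1
      rw [← hK]
      exact FiniteField.pow_card c
    rw [map_mul, hTr, hTr, mul_pow, hc]
    ring
  -- beta nondegeneracy
  have hbne : β ^ 2 ≠ (β ^ q) ^ 2 := by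
    intro heq
    have hAll : ∀ x : F, x ≠ 0 → x ^ (2 * q - 2) = 1 := by
      intro x hx
      obtain ⟨j, rfl⟩ := hβ x hx
      have h0 : β ^ (2 * q) = β ^ 2 := by
        rw [show 2 * q = q * 2 from mul_comm 2 q, pow_mul]
        exact heq.symm
      have h1 : (β ^ j) ^ (2 * q) = (β ^ j) ^ 2 := by
        rw [← pow_mul, mul_comm j (2 * q), pow_mul, h0, ← pow_mul, mul_comm 2 j, pow_mul]
      have h2 : (β ^ j) ^ (2 * q - 2) * (β ^ j) ^ 2 = 1 * (β ^ j) ^ 2 := by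
        rw [← pow_add, show 2 * q - 2 + 2 = 2 * q from by omega, h1, one_mul]
      exact mul_right_cancel₀ (pow_ne_zero 2 hx) h2
    set P : F[X] := X ^ (2 * q - 2) - C 1 with hP
    have hPm : P.Monic := Polynomial.monic_X_pow_sub_C 1 (by omega)
    have hP0 : P ≠ 0 := hPm.ne_zero
    have hsub : Finset.univ.erase (0 : F) ⊆ P.roots.toFinset := by
      intro x hx
      have hx0 : x ≠ 0 := Finset.ne_of_mem_erase hx
      rw [Multiset.mem_toFinset, Polynomial.mem_roots hP0]
      simp [hP, Polynomial.IsRoot, sub_eq_zero, hAll x hx0]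
    have hcard1 : (Finset.univ.erase (0 : F)).card = Fintype.card F - 1 := by
      rw [Finset.card_erase_of_mem (Finset.mem_univ _), Finset.card_univ]
    have hcard2 : P.roots.toFinset.card ≤ 2 * q - 2 := by
      refine le_trans (Multiset.toFinset_card_le _) ?_
      refine le_trans (Polynomial.card_roots' P) ?_
      rw [hP, Polynomial.natDegree_X_pow_sub_C]
    have hle := Finset.card_le_card hsub
    have hcF : 2 * q ≤ Fintype.card F := by
      rw [hF, sq]
      exact Nat.mul_le_mul_right q hq2
    omega
  -- Psi injectivity
  have hker : ∀ u : Fin n → F, Psi q n Tr β u = 0 → u = 0 := by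
    intro u hu
    funext i
    have h1 := congrFun hu ⟨(i : ℕ), by omega⟩
    have h2 := congrFun hu ⟨n + (i : ℕ), by omega⟩
    rw [Psi_lo q n Tr β u i, Pi.zero_apply] at h1
    rw [Psi_hi q n Tr β u i, Pi.zero_apply] at h2
    have e1 : β * u i + β ^ q * (u i) ^ q = 0 := by
      have h3 := hTr (β * u i)
      rw [h1, map_zero, mul_pow] at h3
      exact h3.symm
    have e2 : β ^ q * u i + β * (u i) ^ q = 0 := by
      have h3 := hTr (β ^ q * u i)
      rw [h2, map_zero, mul_pow, hb] at h3
      exact h3.symm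
    have e3 : (β ^ 2 - (β ^ q) ^ 2) * (u i) ^ q = 0 := by
      linear_combination β * e2 - β ^ q * e1
    have e4 : (u i) ^ q = 0 := by
      rcases mul_eq_zero.mp e3 with h | h
      · exact absurd (sub_eq_zero.mp h) hbne
      · exact h
    have : u i = 0 := pow_eq_zero_iff (by omega : q ≠ 0) |>.mp e4
    simpa using this
  -- finrank facts
  haveI : FiniteDimensional K F := Module.Finite.of_finite
  have hfrF : Module.finrank K F = 2 := by
    refine (Nat.pow_right_injective hq2 ?_).symm
    show q ^ 2 = q ^ Module.finrank K F
    rw [← hF, ← hK]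
    exact Module.card_eq_pow_finrank (K := K) (V := F)
  have hfr1 : Module.finrank K (Fin n → F) = 2 * n := by
    rw [Module.finrank_pi_fintype K]
    simp [hfrF, Finset.sum_const, mul_comm]
  have hfr2 : Module.finrank K (Fin (2 * n) → K) = 2 * n := by
    simp [Module.finrank_pi]
  -- the linear equivalence
  set Ψl : (Fin n → F) →ₗ[K] (Fin (2 * n) → K) := PsiL q n Tr β Tr_add Tr_smul with hΨl_def
  have hinjΨ : Function.Injective Ψl := by
    rw [injective_iff_map_eq_zero]
    intro u hu
    exact hker u hu
  set ΨE : (Fin n → F) ≃ₗ[K] (Fin (2 * n) → K) :=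
    LinearMap.linearEquivOfInjective Ψl hinjΨ (by rw [hfr1, hfr2]) with hΨE_def
  have hΨE_app : ∀ u, ΨE u = Psi q n Tr β u := fun u => rfl
  have hsurj : ∀ w : Fin (2 * n) → K, ∃ u, Psi q n Tr β u = w := by
    intro w
    refine ⟨ΨE.symm w, ?_⟩
    rw [← hΨE_app, LinearEquiv.apply_symm_apply]
  -- polynomial data
  set h : K[X] := ((X : K[X]) ^ (2 * n) - 1) / g with hh_def
  have hXm : ((X : K[X]) ^ (2 * n) - 1).Monic := by
    have := Polynomial.monic_X_pow_sub_C (1 : K) (show 2 * n ≠ 0 by omega)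
    simpa using this
  have hgh : g * h = X ^ (2 * n) - 1 := EuclideanDomain.mul_div_cancel' hg.ne_zero hdvd
  have hhm : h.Monic := hg.of_mul_monic_left (by rw [hgh]; exact hXm)
  have hXdeg : ((X : K[X]) ^ (2 * n) - 1).natDegree = 2 * n := by
    have := Polynomial.natDegree_X_pow_sub_C (n := 2 * n) (r := (1 : K))
    simpa using this
  have hhdeg : h.natDegree = 2 * n - k := by
    have hnm := Polynomial.natDegree_mul hg.ne_zero hhm.ne_zero
    rw [hgh, hXdeg, hdeg] at hnm
    omega
  have hrev_le : h.reverse.natDegree ≤ 2 * n - k :=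
    le_trans h.reverse_natDegree_le (le_of_eq hhdeg)
  have hrev0 : h.reverse ≠ 0 := by
    intro h0
    have hcz := Polynomial.coeff_zero_reverse h
    rw [h0, Polynomial.coeff_zero, hhm.leadingCoeff] at hcz
    exact zero_ne_one hcz
  -- spans
  set S : Submodule K (Fin (2 * n) → K) :=
    Submodule.span K (Set.range fun j : Fin k => coeffVec (2 * n) (X ^ (j : ℕ) * h.reverse))
    with hS_def
  set D' : Submodule K (Fin (2 * n) → K) :=
    Submodule.span K (Set.range fun i : Fin (2 * n - k) => coeffVec (2 * n) (X ^ (i : ℕ) * g))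
    with hD'_def
  -- orthogonality
  have horth : ∀ a ∈ cyclicCodeOf (2 * n) g, ∀ j : Fin k,
      dotB (2 * n) a (coeffVec (2 * n) (X ^ (j : ℕ) * h.reverse)) = 0 := by
    intro a ha j
    rw [mem_cyclicCodeOf_iff (2 * n) hn2 g hdvd] at ha
    obtain ⟨c, hc⟩ := ha
    have hdeg_a : (g * c).natDegree < 2 * n := by
      rw [← hc]; exact polyOf_natDegree_lt _ hn2 a
    have hcore := orth_core (2 * n) k hn2 hk g hg hdeg h hhm hhdeg hgh c hdeg_a (j : ℕ) j.isLt
    rw [dotB_apply, ← hcore]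
    refine Finset.sum_congr rfl fun t _ => ?_
    congr 1
    rw [← hc, coeff_polyOf, dif_pos t.isLt]
  have hSle : ∀ w ∈ S, ∀ a ∈ cyclicCodeOf (2 * n) g, dotB (2 * n) a w = 0 := by
    intro w hw a ha
    refine Submodule.span_induction ?_ ?_ ?_ ?_ hw
    · rintro x ⟨j, rfl⟩; exact horth a ha j
    · exact map_zero (dotB (2 * n) a)
    · intro x y _ _ hx hy; rw [map_add, hx, hy, add_zero]
    · intro c x _ hx; rw [map_smul, hx, smul_zero]
  have hgen_mem : ∀ i : Fin (2 * n - k),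
      coeffVec (2 * n) (X ^ (i : ℕ) * g) ∈ cyclicCodeOf (2 * n) g := by
    intro i
    rw [mem_cyclicCodeOf_iff (2 * n) hn2 g hdvd]
    have hd : (X ^ (i : ℕ) * g : K[X]).natDegree < 2 * n := by
      refine lt_of_le_of_lt Polynomial.natDegree_mul_le ?_
      rw [Polynomial.natDegree_X_pow, hdeg]
      have := i.isLt
      omega
    rw [polyOf_coeffVec (2 * n) hd]
    exact Dvd.intro_left _ rfl
  have hOle : ∀ w, (∀ a ∈ cyclicCodeOf (2 * n) g, dotB (2 * n) a w = 0) →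
      w ∈ (dotB (2 * n) (K := K)).orthogonal D' := by
    intro w hw
    rw [LinearMap.BilinForm.mem_orthogonal_iff]
    intro a ha
    refine Submodule.span_induction ?_ ?_ ?_ ?_ ha
    · rintro x ⟨i, rfl⟩; exact hw _ (hgen_mem i)
    · show dotB (2 * n) 0 w = 0
      rw [map_zero]; rfl
    · intro x y _ _ hx hy
      show dotB (2 * n) (x + y) w = 0
      rw [map_add, LinearMap.add_apply,
        show dotB (2 * n) x w = 0 from hx, show dotB (2 * n) y w = 0 from hy, add_zero]
    · intro c x _ hx
      show dotB (2 * n) (c • x) w = 0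
      rw [map_smul, LinearMap.smul_apply, show dotB (2 * n) x w = 0 from hx, smul_zero]
  -- finranks
  have hfinS : Module.finrank K S = k := by
    rw [hS_def, finrank_span_eq_card (indep_shifts (2 * n) k hn2 h.reverse hrev0 (by omega)),
      Fintype.card_fin]
  have hfinD' : Module.finrank K D' = 2 * n - k := by
    rw [hD'_def, finrank_span_eq_card (indep_shifts (2 * n) (2 * n - k) hn2 g hg.ne_zero
      (by rw [hdeg]; omega)), Fintype.card_fin]
  have hfinO : Module.finrank K ((dotB (2 * n) (K := K)).orthogonal D') = k := by
    rw [LinearMap.BilinForm.finrank_orthogonal (dotB_nondeg _), hfinD', hfr2]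
    omega
  have hSeq : S = (dotB (2 * n) (K := K)).orthogonal D' := by
    apply Submodule.eq_of_le_of_finrank_le
    · intro w hw
      exact hOle w (hSle w hw)
    · rw [hfinS, hfinO]
  have hOset : {w : Fin (2 * n) → K | ∀ a ∈ cyclicCodeOf (2 * n) g, dotB (2 * n) a w = 0}
      = (S : Set (Fin (2 * n) → K)) := by
    apply Set.Subset.antisymm
    · intro w hw
      have : w ∈ S := by rw [hSeq]; exact hOle w hw
      exact this
    · intro w hw a ha
      exact hSle w hw a ha
  -- key identity
  have hiden : ∀ u v : Fin n → F,
      algebraMap K F (dotB (2 * n) (Psi q n Tr β u) (tau n (Psi q n Tr β v)))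
        = altInner q n β u v := by
    intro u v
    rw [dotB_apply,
      sum_split n (fun i => Psi q n Tr β u i * tau n (Psi q n Tr β v) i), map_sum]
    unfold altInner
    rw [Finset.mul_sum]
    refine Finset.sum_congr rfl fun i _ => ?_
    rw [Psi_lo q n Tr β u i (by omega), Psi_hi q n Tr β u i (by omega),
      tau_lo n (Psi q n Tr β v) i (by omega) (by omega),
      tau_hi n (Psi q n Tr β v) i (by omega) (by omega),
      Psi_lo q n Tr β v i (by omega), Psi_hi q n Tr β v i (by omega),
      map_add, map_mul, map_mul, map_neg, hTr, hTr, hTr, hTr]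
    simp only [mul_pow, hb]
    ring
  -- generators
  have hshift : ∀ i : Fin k, (cycShift (2 * n))^[(i : ℕ)] (coeffVec (2 * n) h.reverse)
      = coeffVec (2 * n) (X ^ (i : ℕ) * h.reverse) := by
    intro i
    exact shift_iter (2 * n) h.reverse (i : ℕ) (by have := i.isLt; omega)
  set linL : (Fin (2 * n) → K) →ₗ[K] (Fin n → F) :=
    (ΨE.symm.toLinearMap).comp (tauL n) with hlinL_def
  have hlinL_app : ∀ w, linL w = ΨE.symm (tau n w) := fun w => rfl
  have hmap : Submodule.map linL S = Submodule.span K (Set.range fun i : Fin k =>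
      Function.invFun (Psi q n Tr β)
        (tau n ((cycShift (2 * n))^[(i : ℕ)] (coeffVec (2 * n) h.reverse)))) := by
    rw [hS_def, Submodule.map_span, ← Set.range_comp]
    congr 1
    apply congrArg Set.range
    funext i
    show ΨE.symm (tau n (coeffVec (2 * n) (X ^ (i : ℕ) * h.reverse))) = _
    apply ΨE.injective
    rw [LinearEquiv.apply_symm_apply, hΨE_app,
      Function.invFun_eq (hsurj (tau n ((cycShift (2 * n))^[(i : ℕ)]
        (coeffVec (2 * n) h.reverse)))), hshift i]
  -- conclusion
  ext v
  simp only [Set.mem_setOf_eq, SetLike.mem_coe]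
  constructor
  · intro hv
    have hvS : tau n (Psi q n Tr β v) ∈ S := by
      have hmem : tau n (Psi q n Tr β v)
          ∈ {w : Fin (2 * n) → K | ∀ a ∈ cyclicCodeOf (2 * n) g, dotB (2 * n) a w = 0} := by
        intro a ha
        obtain ⟨u, rfl⟩ := hsurj a
        have h0 : altInner q n β u v = 0 := hv u ha
        apply hinj
        rw [map_zero, hiden u v, h0]
      rw [hOset] at hmem
      exact hmem
    rw [← hmap, Submodule.mem_map]
    refine ⟨-(tau n (Psi q n Tr β v)), neg_mem hvS, ?_⟩
    have htn : tau n (-(tau n (Psi q n Tr β v))) = Psi q n Tr β v := by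
      rw [show tau n (-(tau n (Psi q n Tr β v)))
          = -(tau n (tau n (Psi q n Tr β v))) from map_neg (tauL n) _, tau_tau, neg_neg]
    rw [hlinL_app, htn, ← hΨE_app, LinearEquiv.symm_apply_apply]
  · intro hv u hu
    rw [← hmap, Submodule.mem_map] at hv
    obtain ⟨s, hsS, hvs⟩ := hv
    have hΨv : Psi q n Tr β v = tau n s := by
      rw [← hvs, hlinL_app, ← hΨE_app, LinearEquiv.apply_symm_apply]
    have hdot : dotB (2 * n) (Psi q n Tr β u) (tau n (Psi q n Tr β v)) = 0 := by
      rw [hΨv, tau_tau, map_neg,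
        show dotB (2 * n) (Psi q n Tr β u) s = 0 from hSle s hsS (Psi q n Tr β u) hu,
        neg_zero]
    have hfin := hiden u v
    rw [hdot, map_zero] at hfin
    exact hfin.symm
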